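/- Let s, K, α ∈ {1,…,N}, let W ∈ {0,1}^{m'×N} be (K, α)-coherent with K ≥ 4αs + 1, and let B'_N ∈ {0,1}^{2(1+⌈log₂N⌉)×N} be the extended bit testing matrix. Then there exists a map f : ℂ^{2(1+⌈log₂N⌉)m'} → ℂ^N whose outputs are 2s-sparse, such that for all x ∈ ℂ^N and all n ∈ ℂ^{2(1+⌈log₂N⌉)m'}: ‖x − f((W ⊙ B'_N)x + n)‖₂ ≤ ‖x − x_{2s}‖₂ + 6(1+√2)·( ‖x − x_s‖₁/√s + √s·‖n‖_∞ ). -/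

import Mathlib

/-- A binary matrix `W` is `(K, α)`-coherent: it has `{0,1}` entries, every column contains at
least `K` ones, and distinct columns have inner product at most `α`. -/
def Coherent {m N : ℕ} (W : Matrix (Fin m) (Fin N) ℝ) (K : ℕ) (α : ℝ) : Prop :=
  (∀ i j, W i j = 0 ∨ W i j = 1) ∧
  (∀ j, (K : ℝ) ≤ ∑ i, W i j) ∧
  (∀ j l, j ≠ l → ∑ i, W i j * W i l ≤ α)

/-- The bit testing matrix `B_N ∈ {0,1}^{(1+⌈log₂N⌉)×N}`: the `k`-th column (0-based) is a `1`
followed by the binary expansion of `k`. -/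
def bitTest (N : ℕ) : Matrix (Fin (1 + Nat.clog 2 N)) (Fin N) ℝ :=
  fun i k => if (i : ℕ) = 0 then 1 else if Nat.testBit (k : ℕ) ((i : ℕ) - 1) then 1 else 0

/-- The extended bit testing matrix `B'_N ∈ {0,1}^{2(1+⌈log₂N⌉)×N}`, obtained by appending to
each column of `B_N` its binary complement. -/
def bitTestExt (N : ℕ) : Matrix (Fin (2 * (1 + Nat.clog 2 N))) (Fin N) ℝ :=
  fun i k =>
    if h : (i : ℕ) < 1 + Nat.clog 2 N then bitTest N ⟨i, h⟩ k
    else 1 - bitTest N ⟨(i : ℕ) - (1 + Nat.clog 2 N), by have := i.isLt; omega⟩ k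

/-- The Khatri–Rao (columnwise Kronecker) product: `(B ⊙ C)_{qm+r,k} = B_{r,k}·C_{q,k}`. -/
def khatriRao {m p N : ℕ} (B : Matrix (Fin m) (Fin N) ℝ) (C : Matrix (Fin p) (Fin N) ℝ) :
    Matrix (Fin (m * p)) (Fin N) ℝ :=
  fun i k =>
    B ⟨(i : ℕ) % m, Nat.mod_lt _ (Nat.pos_of_ne_zero
        (by rintro rfl; exact absurd i.isLt (by simp)))⟩ k *
    C ⟨(i : ℕ) / m, Nat.div_lt_of_lt_mul i.isLt⟩ k

/-- The squared Euclidean (ℓ²) norm of a vector in `ℂ^n`. -/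
noncomputable def nsq {n : ℕ} (x : Fin n → ℂ) : ℝ := ∑ i, ‖x i‖ ^ 2

/-- The Euclidean (ℓ²) norm of a vector in `ℂ^n`. -/
noncomputable def l2 {n : ℕ} (x : Fin n → ℂ) : ℝ := Real.sqrt (nsq x)

/-- The ℓ^∞ norm of a vector in `ℂ^n`. -/
noncomputable def linf {n : ℕ} (x : Fin n → ℂ) : ℝ := ⨆ i, ‖x i‖

/-- The best `s`-sparse approximation error of `u` in the ℓ¹ norm. -/
noncomputable def bestErr1 {N : ℕ} (u : Fin N → ℂ) (s : ℕ) : ℝ :=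
  sInf {t : ℝ | ∃ v : Fin N → ℂ, Set.ncard {i | v i ≠ 0} ≤ s ∧ t = ∑ i, ‖u i - v i‖}

/-- The best `s`-sparse approximation error of `u` in the ℓ² norm. -/
noncomputable def bestErr2 {N : ℕ} (u : Fin N → ℂ) (s : ℕ) : ℝ :=
  sInf {t : ℝ | ∃ v : Fin N → ℂ, Set.ncard {i | v i ≠ 0} ≤ s ∧ t = l2 (u - v)}

section basic
variable {n : ℕ}

instance finNeNonempty [NeZero n] : Nonempty (Fin n) :=
  Fin.pos_iff_nonempty.mp (Nat.pos_of_ne_zero (NeZero.ne n))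

lemma linf_eq_norm [NeZero n] (x : Fin n → ℂ) : linf x = ‖x‖ := by
  unfold linf
  refine le_antisymm ?_ ?_
  · exact ciSup_le fun i => norm_le_pi_norm x i
  · refine (pi_norm_le_iff_of_nonempty x).2 fun i =>
      le_ciSup (f := fun j => ‖x j‖) (Set.Finite.bddAbove (Set.finite_range _)) i

lemma apply_le_linf [NeZero n] (x : Fin n → ℂ) (i : Fin n) : ‖x i‖ ≤ linf x := by
  rw [linf_eq_norm]; exact norm_le_pi_norm x i

lemma linf_nonneg [NeZero n] (x : Fin n → ℂ) : 0 ≤ linf x := by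
  rw [linf_eq_norm]; exact norm_nonneg x

lemma linf_add_le [NeZero n] (x y : Fin n → ℂ) : linf (x + y) ≤ linf x + linf y := by
  simp only [linf_eq_norm]; exact norm_add_le x y

lemma linf_neg [NeZero n] (x : Fin n → ℂ) : linf (-x) = linf x := by
  simp only [linf_eq_norm, norm_neg]

lemma nsq_nonneg (x : Fin n → ℂ) : 0 ≤ nsq x :=
  Finset.sum_nonneg fun i _ => by positivity

lemma l2_nonneg (x : Fin n → ℂ) : 0 ≤ l2 x := Real.sqrt_nonneg _

lemma l2_eq_norm (x : Fin n → ℂ) :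
    l2 x = ‖(WithLp.equiv 2 (Fin n → ℂ)).symm x‖ := by
  rw [EuclideanSpace.norm_eq]; rfl

lemma l2_add_le (x y : Fin n → ℂ) : l2 (x + y) ≤ l2 x + l2 y := by
  simp only [l2_eq_norm]
  have : (WithLp.equiv 2 (Fin n → ℂ)).symm (x + y)
      = (WithLp.equiv 2 (Fin n → ℂ)).symm x + (WithLp.equiv 2 (Fin n → ℂ)).symm y := rfl
  rw [this]; exact norm_add_le _ _

lemma l2_sub_rev (a b : Fin n → ℂ) : l2 (a - b) = l2 (b - a) := by
  unfold l2 nsq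
  congr 1
  exact Finset.sum_congr rfl fun i _ => by rw [Pi.sub_apply, Pi.sub_apply, norm_sub_rev]

lemma apply_le_l2 (x : Fin n → ℂ) (i : Fin n) : ‖x i‖ ≤ l2 x := by
  have h1 : ‖x i‖ ^ 2 ≤ nsq x := by
    unfold nsq
    refine Finset.single_le_sum (f := fun j => ‖x j‖ ^ 2) (fun j _ => by positivity) (Finset.mem_univ i)
  have := Real.sqrt_le_sqrt h1
  rwa [Real.sqrt_sq (norm_nonneg _)] at this

lemma l2_le_sum_norm (x : Fin n → ℂ) : l2 x ≤ ∑ i, ‖x i‖ := by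
  have h : nsq x ≤ (∑ i, ‖x i‖) ^ 2 := by
    unfold nsq
    have : ∀ i ∈ Finset.univ, ‖x i‖ ^ 2 ≤ ‖x i‖ * ∑ j, ‖x j‖ := by
      intro i _
      have : ‖x i‖ ≤ ∑ j, ‖x j‖ :=
        Finset.single_le_sum (f := fun j => ‖x j‖) (fun j _ => norm_nonneg _) (Finset.mem_univ i)
      nlinarith [norm_nonneg (x i)]
    calc nsq x ≤ ∑ i, ‖x i‖ * ∑ j, ‖x j‖ := Finset.sum_le_sum this
    _ = (∑ i, ‖x i‖) ^ 2 := by rw [← Finset.sum_mul]; ring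
  have := Real.sqrt_le_sqrt h
  rwa [Real.sqrt_sq (Finset.sum_nonneg fun i _ => norm_nonneg _)] at this

end basic

section best
variable {N : ℕ}

lemma ncard_supp (v : Fin N → ℂ) :
    Set.ncard {i | v i ≠ 0} = (Finset.univ.filter fun i => v i ≠ 0).card := by
  rw [show {i | v i ≠ 0} = ↑(Finset.univ.filter fun i => v i ≠ 0) by ext i; simp,
    Set.ncard_coe_finset]

lemma ncard_supp_piecewise_le (T : Finset (Fin N)) (u : Fin N → ℂ) :
    Set.ncard {i | T.piecewise u 0 i ≠ 0} ≤ T.card := by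
  have hsub : {i | T.piecewise u 0 i ≠ 0} ⊆ ↑T := by
    intro i hi
    by_contra hiT
    simp only [Set.mem_setOf_eq, Finset.piecewise_eq_of_notMem _ _ _ (by simpa using hiT)] at hi
    exact hi rfl
  calc Set.ncard {i | T.piecewise u 0 i ≠ 0} ≤ Set.ncard (↑T : Set (Fin N)) :=
        Set.ncard_le_ncard hsub (Set.toFinite _)
  _ = T.card := Set.ncard_coe_finset T

lemma sum_flip (T : Finset (Fin N)) (g : Fin N → ℝ) :
    ∑ i, (if i ∈ T then 0 else g i) = ∑ i ∈ Tᶜ, g i := by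
  rw [Finset.sum_congr rfl (g := fun i => if i ∈ Tᶜ then g i else 0)
    (fun i _ => by by_cases h : i ∈ T <;> simp [h]), Finset.sum_ite_mem, Finset.univ_inter]

lemma sum_sub_piecewise (T : Finset (Fin N)) (u : Fin N → ℂ) :
    ∑ i, ‖u i - T.piecewise u 0 i‖ = ∑ i ∈ Tᶜ, ‖u i‖ := by
  rw [← sum_flip T (fun i => ‖u i‖)]
  refine Finset.sum_congr rfl fun i _ => ?_
  by_cases h : i ∈ T <;> simp [h, Finset.piecewise_eq_of_mem, Finset.piecewise_eq_of_notMem]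

lemma nsq_sub_piecewise (T : Finset (Fin N)) (u : Fin N → ℂ) :
    nsq (u - T.piecewise u 0) = ∑ i ∈ Tᶜ, ‖u i‖ ^ 2 := by
  rw [← sum_flip T (fun i => ‖u i‖ ^ 2)]
  refine Finset.sum_congr rfl fun i _ => ?_
  by_cases h : i ∈ T <;>
    simp [h, Finset.piecewise_eq_of_mem, Finset.piecewise_eq_of_notMem, Pi.sub_apply]

lemma bestErr1_bddBelow (u : Fin N → ℂ) (s : ℕ) :
    BddBelow {t : ℝ | ∃ v : Fin N → ℂ, Set.ncard {i | v i ≠ 0} ≤ s ∧ t = ∑ i, ‖u i - v i‖} := by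
  refine ⟨0, fun t ht => ?_⟩
  obtain ⟨w, -, rfl⟩ := ht
  exact Finset.sum_nonneg fun i _ => norm_nonneg _

lemma bestErr2_bddBelow (u : Fin N → ℂ) (s : ℕ) :
    BddBelow {t : ℝ | ∃ v : Fin N → ℂ, Set.ncard {i | v i ≠ 0} ≤ s ∧ t = l2 (u - v)} := by
  refine ⟨0, fun t ht => ?_⟩
  obtain ⟨w, -, rfl⟩ := ht
  exact Real.sqrt_nonneg _

lemma bestErr1_le (u : Fin N → ℂ) (s : ℕ) (v : Fin N → ℂ)
    (hv : Set.ncard {i | v i ≠ 0} ≤ s) : bestErr1 u s ≤ ∑ i, ‖u i - v i‖ :=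
  csInf_le (bestErr1_bddBelow u s) ⟨v, hv, rfl⟩

lemma bestErr2_le (u : Fin N → ℂ) (s : ℕ) (v : Fin N → ℂ)
    (hv : Set.ncard {i | v i ≠ 0} ≤ s) : bestErr2 u s ≤ l2 (u - v) :=
  csInf_le (bestErr2_bddBelow u s) ⟨v, hv, rfl⟩

lemma bestErr1_nonneg (u : Fin N → ℂ) (s : ℕ) : 0 ≤ bestErr1 u s := by
  refine le_csInf ⟨∑ i, ‖u i - 0‖, 0, by simp, rfl⟩ fun t ht => ?_
  obtain ⟨w, -, rfl⟩ := ht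
  exact Finset.sum_nonneg fun i _ => norm_nonneg _

lemma exists_best1 (u : Fin N → ℂ) (s : ℕ) :
    ∃ T : Finset (Fin N), T.card ≤ s ∧ bestErr1 u s = ∑ i ∈ Tᶜ, ‖u i‖ ∧
      ∀ T' : Finset (Fin N), T'.card ≤ s → ∑ i ∈ Tᶜ, ‖u i‖ ≤ ∑ i ∈ T'ᶜ, ‖u i‖ := by
  obtain ⟨T, hTmem, hTmin⟩ := Finset.exists_min_image
    ((Finset.univ : Finset (Fin N)).powerset.filter fun T => T.card ≤ s)
    (fun T => ∑ i ∈ Tᶜ, ‖u i‖) ⟨∅, by simp⟩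
  have hTcard : T.card ≤ s := (Finset.mem_filter.1 hTmem).2
  have hmin : ∀ T' : Finset (Fin N), T'.card ≤ s → ∑ i ∈ Tᶜ, ‖u i‖ ≤ ∑ i ∈ T'ᶜ, ‖u i‖ :=
    fun T' hT' => hTmin T' (Finset.mem_filter.2 ⟨Finset.mem_powerset.2 (Finset.subset_univ _), hT'⟩)
  refine ⟨T, hTcard, le_antisymm ?_ ?_, hmin⟩
  · calc bestErr1 u s ≤ ∑ i, ‖u i - T.piecewise u 0 i‖ :=
        bestErr1_le u s _ (le_trans (ncard_supp_piecewise_le T u) hTcard)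
    _ = ∑ i ∈ Tᶜ, ‖u i‖ := sum_sub_piecewise T u
  · refine le_csInf ⟨∑ i, ‖u i - 0‖, 0, by simp, rfl⟩ fun t ht => ?_
    obtain ⟨v, hv, rfl⟩ := ht
    set Tv := Finset.univ.filter fun i => v i ≠ 0 with hTv
    have hTvcard : Tv.card ≤ s := by rw [← ncard_supp]; exact hv
    calc ∑ i ∈ Tᶜ, ‖u i‖ ≤ ∑ i ∈ Tvᶜ, ‖u i‖ := hmin Tv hTvcard
    _ = ∑ i ∈ Tvᶜ, ‖u i - v i‖ := by
        refine Finset.sum_congr rfl fun i hi => ?_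
        have : v i = 0 := by
          by_contra h
          exact (Finset.mem_compl.1 hi) (by simp [hTv, h])
        rw [this, sub_zero]
    _ ≤ ∑ i, ‖u i - v i‖ :=
        Finset.sum_le_sum_of_subset_of_nonneg (Finset.subset_univ _)
          fun i _ _ => norm_nonneg _

lemma exists_best2 (u : Fin N → ℂ) (s : ℕ) :
    ∃ T : Finset (Fin N), T.card ≤ s ∧ bestErr2 u s = l2 (u - T.piecewise u 0) := by
  obtain ⟨T, hTmem, hTmin⟩ := Finset.exists_min_image
    ((Finset.univ : Finset (Fin N)).powerset.filter fun T => T.card ≤ s)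
    (fun T => ∑ i ∈ Tᶜ, ‖u i‖ ^ 2) ⟨∅, by simp⟩
  have hTcard : T.card ≤ s := (Finset.mem_filter.1 hTmem).2
  have hmin : ∀ T' : Finset (Fin N), T'.card ≤ s →
      ∑ i ∈ Tᶜ, ‖u i‖ ^ 2 ≤ ∑ i ∈ T'ᶜ, ‖u i‖ ^ 2 :=
    fun T' hT' => hTmin T' (Finset.mem_filter.2 ⟨Finset.mem_powerset.2 (Finset.subset_univ _), hT'⟩)
  refine ⟨T, hTcard, le_antisymm ?_ ?_⟩
  · exact bestErr2_le u s _ (le_trans (ncard_supp_piecewise_le T u) hTcard)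
  · refine le_csInf ⟨l2 (u - 0), 0, by simp, rfl⟩ fun t ht => ?_
    obtain ⟨v, hv, rfl⟩ := ht
    set Tv := Finset.univ.filter fun i => v i ≠ 0 with hTv
    have hTvcard : Tv.card ≤ s := by rw [← ncard_supp]; exact hv
    unfold l2
    apply Real.sqrt_le_sqrt
    rw [nsq_sub_piecewise]
    calc ∑ i ∈ Tᶜ, ‖u i‖ ^ 2 ≤ ∑ i ∈ Tvᶜ, ‖u i‖ ^ 2 := hmin Tv hTvcard
    _ = ∑ i ∈ Tvᶜ, ‖u i - v i‖ ^ 2 := by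
        refine Finset.sum_congr rfl fun i hi => ?_
        have : v i = 0 := by
          by_contra h
          exact (Finset.mem_compl.1 hi) (by simp [hTv, h])
        rw [this, sub_zero]
    _ ≤ nsq (u - v) :=
        Finset.sum_le_sum_of_subset_of_nonneg (Finset.subset_univ _)
          fun i _ _ => by positivity

end best

section mat
variable {m' N : ℕ}

lemma bitTest_mem (N : ℕ) (i : Fin (1 + Nat.clog 2 N)) (k : Fin N) :
    bitTest N i k = 0 ∨ bitTest N i k = 1 := by
  unfold bitTest; split_ifs <;> simp

lemma bitTestExt_mem (N : ℕ) (i : Fin (2 * (1 + Nat.clog 2 N))) (k : Fin N) :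
    bitTestExt N i k = 0 ∨ bitTestExt N i k = 1 := by
  unfold bitTestExt
  split_ifs with h
  · exact bitTest_mem N _ k
  · rcases bitTest_mem N ⟨(i : ℕ) - (1 + Nat.clog 2 N), by have := i.isLt; omega⟩ k with h' | h' <;>
      rw [h'] <;> simp

/-- the canonical embedding of a row of `W` into the rows of the Khatri-Rao product -/
def emb (hm : 0 < 2 * (1 + Nat.clog 2 N)) (r : Fin m') : Fin (m' * (2 * (1 + Nat.clog 2 N))) :=
  ⟨(r : ℕ), lt_of_lt_of_le r.isLt (Nat.le_mul_of_pos_right m' hm)⟩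

lemma row_eq (W : Matrix (Fin m') (Fin N) ℝ) (hm' : 0 < m') (r : Fin m') (x : Fin N → ℂ) :
    ((khatriRao W (bitTestExt N)).map (fun a => (a : ℂ))).mulVec x
      (emb (by positivity) r) = ∑ k, (W r k : ℂ) * x k := by
  unfold Matrix.mulVec dotProduct
  refine Finset.sum_congr rfl fun k _ => ?_
  have h1 : ((emb (N := N) (by positivity) r : ℕ)) % m' = (r : ℕ) := Nat.mod_eq_of_lt r.isLt
  have h2 : ((emb (N := N) (by positivity) r : ℕ)) / m' = 0 := Nat.div_eq_of_lt r.isLt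
  simp only [Matrix.map_apply, khatriRao, h1, h2]
  have h3 : bitTestExt N ⟨0, by positivity⟩ k = 1 := by
    have hlt : ((⟨0, by positivity⟩ : Fin (2 * (1 + Nat.clog 2 N))) : ℕ) < 1 + Nat.clog 2 N := by
      simp only [Fin.val_mk]; omega
    simp only [bitTestExt]
    rw [dif_pos hlt]
    simp only [bitTest]
    simp
  rw [h3]; simp

lemma linf_mulVec_le (W : Matrix (Fin m') (Fin N) ℝ) (hW01 : ∀ i j, W i j = 0 ∨ W i j = 1)
    (r : Fin (m' * (2 * (1 + Nat.clog 2 N)))) (u : Fin N → ℂ) :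
    ‖((khatriRao W (bitTestExt N)).map (fun a => (a : ℂ))).mulVec u r‖ ≤ ∑ k, ‖u k‖ := by
  unfold Matrix.mulVec dotProduct
  refine le_trans (norm_sum_le _ _) (Finset.sum_le_sum fun k _ => ?_)
  simp only [Matrix.map_apply, norm_mul, Complex.norm_real, Real.norm_eq_abs]
  have h1 : |khatriRao W (bitTestExt N) r k| ≤ 1 := by
    unfold khatriRao
    rw [abs_mul]
    have hb := bitTestExt_mem N ⟨(r : ℕ) / m', Nat.div_lt_of_lt_mul r.isLt⟩ k
    have hw := hW01 ⟨(r : ℕ) % m', Nat.mod_lt _ (Nat.pos_of_ne_zero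
      (by rintro rfl; exact absurd r.isLt (by simp)))⟩ k
    rcases hw with h | h <;> rcases hb with h' | h' <;> rw [h, h'] <;> norm_num
  nlinarith [norm_nonneg (u k), abs_nonneg (khatriRao W (bitTestExt N) r k)]

end mat

section core
variable {m' N : ℕ}

/-- Core per-coordinate estimate from coherence. -/
lemma core_est (W : Matrix (Fin m') (Fin N) ℝ) (K s α : ℕ)
    (hW01 : ∀ i j, W i j = 0 ∨ W i j = 1)
    (hWcol : ∀ j, (K : ℝ) ≤ ∑ i, W i j)
    (hWcoh : ∀ j l, j ≠ l → ∑ i, W i j * W i l ≤ (α : ℝ))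
    (hs : 1 ≤ s) (hα : 1 ≤ α) (hKs : 4 * α * s + 1 ≤ K)
    (h : Fin N → ℂ) (E : ℝ)
    (hE : ∀ r : Fin m', ‖∑ k, (W r k : ℂ) * h k‖ ≤ E)
    (T : Finset (Fin N)) (hT : T.card ≤ 2 * s) (j : Fin N) :
    ‖h j‖ ≤ E + (∑ l ∈ Tᶜ, ‖h l‖) / (2 * s) := by
  classical
  set I : Fin N → Finset (Fin m') := fun l => Finset.univ.filter fun r => W r l = 1 with hI
  -- column sums are cardinalities
  have hcardI : ∀ l, ((I l).card : ℝ) = ∑ r, W r l := by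
    intro l
    rw [Finset.card_filter]
    push_cast
    refine Finset.sum_congr rfl fun r _ => ?_
    rcases hW01 r l with h0 | h1
    · rw [if_neg (by rw [h0]; norm_num), h0]
    · rw [if_pos h1, h1]
  have hKI : K ≤ (I j).card := by
    have := hWcol j
    rw [← hcardI j] at this
    exact_mod_cast this
  -- intersections are small
  have hinter : ∀ l, l ≠ j → ((I j) ∩ (I l)).card ≤ α := by
    intro l hl
    have hcast : (((I j) ∩ (I l)).card : ℝ) = ∑ r, W r j * W r l := by
      rw [show (I j) ∩ (I l) = Finset.univ.filter fun r => W r j = 1 ∧ W r l = 1 by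
        simp [hI, Finset.filter_and, Finset.filter_filter]]
      rw [Finset.card_filter]
      push_cast
      refine Finset.sum_congr rfl fun r _ => ?_
      rcases hW01 r j with h0 | h1 <;> rcases hW01 r l with h0' | h1'
      · rw [if_neg (by rw [h0]; rintro ⟨c, -⟩; norm_num at c), h0]; ring
      · rw [if_neg (by rw [h0]; rintro ⟨c, -⟩; norm_num at c), h0]; ring
      · rw [if_neg (by rw [h0']; rintro ⟨-, c⟩; norm_num at c), h0']; ring
      · rw [if_pos ⟨h1, h1'⟩, h1, h1']; norm_num
    have := hWcoh j l (fun e => hl e.symm)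
    rw [← hcast] at this
    exact_mod_cast this
  -- bad rows
  set Bd : Finset (Fin m') := (T.erase j).biUnion (fun l => (I j) ∩ (I l)) with hBd
  have hBdcard : Bd.card ≤ 2 * s * α := by
    calc Bd.card ≤ ∑ l ∈ T.erase j, ((I j) ∩ (I l)).card := Finset.card_biUnion_le
    _ ≤ ∑ _l ∈ T.erase j, α :=
        Finset.sum_le_sum fun l hl => hinter l (Finset.ne_of_mem_erase hl)
    _ = (T.erase j).card * α := by rw [Finset.sum_const, smul_eq_mul]
    _ ≤ 2 * s * α := by
        have := Finset.card_erase_le (a := j) (s := T)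
        exact Nat.mul_le_mul_right α (le_trans this hT)
  set Gd : Finset (Fin m') := (I j) \ Bd with hGd
  have hGdcard : 2 * α * s + 1 ≤ Gd.card := by
    have h1 : (I j).card - Bd.card ≤ Gd.card := Finset.le_card_sdiff Bd (I j)
    have e1 : 4 * α * s = 2 * s * α + 2 * α * s := by ring
    omega
  have hGdne : Gd.Nonempty := Finset.card_pos.1 (by omega)
  -- residual
  set U : Finset (Fin N) := insert j T with hU
  set ρ : Fin m' → ℂ := fun r => ∑ l ∈ Uᶜ, (W r l : ℂ) * h l with hρ
  -- measurements on good rows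
  have key1 : ∀ r ∈ Gd, ∑ k, (W r k : ℂ) * h k = h j + ρ r := by
    intro r hr
    have hrIj : r ∈ I j := (Finset.mem_sdiff.1 hr).1
    have hrW : W r j = 1 := by simpa [hI] using hrIj
    have hzero : ∀ l ∈ U.erase j, W r l = 0 := by
      intro l hl
      have hlT : l ∈ T.erase j := by
        rw [hU] at hl
        rwa [Finset.erase_insert_eq_erase] at hl
      rcases hW01 r l with h0 | h1
      · exact h0
      · exfalso
        have : r ∈ Bd := Finset.mem_biUnion.2 ⟨l, hlT, Finset.mem_inter.2 ⟨hrIj, by simp [hI, h1]⟩⟩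
        exact (Finset.mem_sdiff.1 hr).2 this
    have hsplit : ∑ k, (W r k : ℂ) * h k
        = ∑ l ∈ U, (W r l : ℂ) * h l + ∑ l ∈ Uᶜ, (W r l : ℂ) * h l :=
      (Finset.sum_add_sum_compl U _).symm
    have hjU : j ∈ U := Finset.mem_insert_self j T
    have hUsum : ∑ l ∈ U, (W r l : ℂ) * h l = h j := by
      rw [← Finset.add_sum_erase U _ hjU, hrW]
      rw [Finset.sum_eq_zero fun l hl => by rw [hzero l hl]; simp]
      simp
    rw [hsplit, hUsum]
  -- total residual mass on good rows
  have key2 : ∑ r ∈ Gd, ‖ρ r‖ ≤ (α : ℝ) * ∑ l ∈ Uᶜ, ‖h l‖ := by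
    have hbound : ∀ r ∈ Gd, ‖ρ r‖ ≤ ∑ l ∈ Uᶜ, W r l * ‖h l‖ := by
      intro r _
      refine le_trans (norm_sum_le _ _) (Finset.sum_le_sum fun l _ => ?_)
      rw [norm_mul, Complex.norm_real, Real.norm_eq_abs]
      rcases hW01 r l with h0 | h0 <;> rw [h0] <;> simp
    calc ∑ r ∈ Gd, ‖ρ r‖ ≤ ∑ r ∈ Gd, ∑ l ∈ Uᶜ, W r l * ‖h l‖ := Finset.sum_le_sum hbound
    _ = ∑ l ∈ Uᶜ, (∑ r ∈ Gd, W r l) * ‖h l‖ := by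
        rw [Finset.sum_comm]
        exact Finset.sum_congr rfl fun l _ => by rw [Finset.sum_mul]
    _ ≤ ∑ l ∈ Uᶜ, (α : ℝ) * ‖h l‖ := by
        refine Finset.sum_le_sum fun l hl => ?_
        have hlj : l ≠ j := by
          intro e
          exact (Finset.mem_compl.1 hl) (e ▸ Finset.mem_insert_self j T)
        have hWsum : ∑ r ∈ Gd, W r l ≤ (α : ℝ) := by
          have hsub : ∑ r ∈ Gd, W r l ≤ ∑ r ∈ (I j) ∩ (I l), W r l := by
            -- every good row with W r l = 1 lies in the intersection
            have : ∑ r ∈ Gd, W r l = ∑ r ∈ Gd.filter (fun r => W r l = 1), W r l := by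
              rw [Finset.sum_filter_of_ne]
              intro r _ hne
              rcases hW01 r l with h0 | h1
              · exact absurd h0 hne
              · exact h1
            rw [this]
            refine Finset.sum_le_sum_of_subset_of_nonneg ?_ ?_
            · intro r hr
              have h1 := (Finset.mem_filter.1 hr).2
              have h2 := (Finset.mem_sdiff.1 (Finset.mem_filter.1 hr).1).1
              exact Finset.mem_inter.2 ⟨h2, by simp [hI, h1]⟩
            · intro r _ _
              rcases hW01 r l with h0 | h1
              · rw [h0]
              · rw [h1]; norm_num
          have hval : ∑ r ∈ (I j) ∩ (I l), W r l = ((I j) ∩ (I l)).card := by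
            rw [Finset.card_eq_sum_ones]
            push_cast
            refine Finset.sum_congr rfl fun r hr => ?_
            have := (Finset.mem_inter.1 hr).2
            simpa [hI] using this
          have hc := hinter l hlj
          calc ∑ r ∈ Gd, W r l ≤ ((I j) ∩ (I l)).card := hsub.trans (le_of_eq hval)
          _ ≤ (α : ℝ) := by exact_mod_cast hc
        exact mul_le_mul_of_nonneg_right hWsum (norm_nonneg _)
    _ = (α : ℝ) * ∑ l ∈ Uᶜ, ‖h l‖ := by rw [Finset.mul_sum]
  -- pick the best good row
  obtain ⟨r₀, hr₀Gd, hr₀min⟩ := Finset.exists_min_image Gd (fun r => ‖ρ r‖) hGdne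
  have hcardmin : (Gd.card : ℝ) * ‖ρ r₀‖ ≤ ∑ r ∈ Gd, ‖ρ r‖ := by
    calc (Gd.card : ℝ) * ‖ρ r₀‖ = ∑ _r ∈ Gd, ‖ρ r₀‖ := by
          rw [Finset.sum_const, nsmul_eq_mul]
    _ ≤ ∑ r ∈ Gd, ‖ρ r‖ := Finset.sum_le_sum fun r hr => hr₀min r hr
  -- conclude
  have hσ' : ∑ l ∈ Uᶜ, ‖h l‖ ≤ ∑ l ∈ Tᶜ, ‖h l‖ := by
    refine Finset.sum_le_sum_of_subset_of_nonneg ?_ fun l _ _ => norm_nonneg _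
    exact Finset.compl_subset_compl.2 (Finset.subset_insert j T)
  set σ : ℝ := ∑ l ∈ Tᶜ, ‖h l‖ with hσ
  have hσ0 : 0 ≤ σ := Finset.sum_nonneg fun l _ => norm_nonneg _
  have hρσ : (2 * α * s + 1 : ℝ) * ‖ρ r₀‖ ≤ (α : ℝ) * σ := by
    have h1 : ((2 * α * s + 1 : ℕ) : ℝ) ≤ (Gd.card : ℝ) := by exact_mod_cast hGdcard
    push_cast at h1
    nlinarith [norm_nonneg (ρ r₀), le_trans hcardmin (le_trans key2
      (mul_le_mul_of_nonneg_left hσ' (by positivity)))]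
  have hρfinal : ‖ρ r₀‖ ≤ σ / (2 * s) := by
    rw [le_div_iff₀ (by positivity)]
    have hα1 : (1 : ℝ) ≤ (α : ℝ) := by exact_mod_cast hα
    have hs1 : (1 : ℝ) ≤ (s : ℝ) := by exact_mod_cast hs
    nlinarith [norm_nonneg (ρ r₀)]
  have hjbound : ‖h j‖ ≤ ‖∑ k, (W r₀ k : ℂ) * h k‖ + ‖ρ r₀‖ := by
    rw [key1 r₀ hr₀Gd]
    calc ‖h j‖ = ‖(h j + ρ r₀) - ρ r₀‖ := by ring_nf
    _ ≤ ‖h j + ρ r₀‖ + ‖ρ r₀‖ := norm_sub_le _ _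
  calc ‖h j‖ ≤ ‖∑ k, (W r₀ k : ℂ) * h k‖ + ‖ρ r₀‖ := hjbound
  _ ≤ E + σ / (2 * s) := by
      push_cast
      exact add_le_add (hE r₀) (by exact_mod_cast hρfinal)

end core

section l2b
variable {N : ℕ}

lemma l2_bound (s : ℕ) (hs : 1 ≤ s) (h : Fin N → ℂ) (E : ℝ) (hE0 : 0 ≤ E)
    (T : Finset (Fin N)) (hT : T.card ≤ 2 * s)
    (hpt : ∀ j, ‖h j‖ ≤ E + (∑ l ∈ Tᶜ, ‖h l‖) / (2 * s)) :
    l2 h ≤ Real.sqrt 2 * (Real.sqrt s * E + (∑ l ∈ Tᶜ, ‖h l‖) / Real.sqrt s) := by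
  set σ : ℝ := ∑ l ∈ Tᶜ, ‖h l‖ with hσdef
  have hσ0 : 0 ≤ σ := Finset.sum_nonneg fun l _ => norm_nonneg _
  have hspos : (0 : ℝ) < s := by exact_mod_cast hs
  set M : ℝ := E + σ / (2 * s) with hMdef
  have hM0 : 0 ≤ M := by positivity
  have hMs : M * (2 * s) = 2 * s * E + σ := by
    rw [hMdef]; field_simp
  have hnsq : nsq h ≤ 2 * s * M ^ 2 + M * σ := by
    have hsplit : nsq h = ∑ j ∈ T, ‖h j‖ ^ 2 + ∑ j ∈ Tᶜ, ‖h j‖ ^ 2 := by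
      rw [nsq, ← Finset.sum_add_sum_compl T]
    have hA : ∑ j ∈ T, ‖h j‖ ^ 2 ≤ 2 * s * M ^ 2 := by
      calc ∑ j ∈ T, ‖h j‖ ^ 2 ≤ ∑ _j ∈ T, M ^ 2 := by
            refine Finset.sum_le_sum fun j _ => ?_
            have := hpt j
            nlinarith [norm_nonneg (h j)]
      _ = T.card * M ^ 2 := by rw [Finset.sum_const, nsmul_eq_mul]
      _ ≤ 2 * s * M ^ 2 := by
            have : (T.card : ℝ) ≤ 2 * s := by exact_mod_cast hT
            nlinarith [sq_nonneg M]
    have hB : ∑ j ∈ Tᶜ, ‖h j‖ ^ 2 ≤ M * σ := by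
      calc ∑ j ∈ Tᶜ, ‖h j‖ ^ 2 ≤ ∑ j ∈ Tᶜ, M * ‖h j‖ := by
            refine Finset.sum_le_sum fun j _ => ?_
            have := hpt j
            nlinarith [norm_nonneg (h j)]
      _ = M * σ := by rw [hσdef, Finset.mul_sum]
    linarith
  set t : ℝ := Real.sqrt s with htdef
  have htpos : 0 < t := Real.sqrt_pos.2 hspos
  have ht2 : t ^ 2 = s := Real.sq_sqrt (le_of_lt hspos)
  have hA : t * E + σ / t = (s * E + σ) / t := by
    rw [eq_div_iff (ne_of_gt htpos)]
    field_simp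
    linear_combination E * ht2
  have hX2 : (Real.sqrt 2 * (t * E + σ / t)) ^ 2 = 2 * (s * E + σ) ^ 2 / s := by
    rw [hA, mul_pow, div_pow, ht2, Real.sq_sqrt (by norm_num : (0:ℝ) ≤ 2)]
    ring
  have hfinal : nsq h ≤ (Real.sqrt 2 * (t * E + σ / t)) ^ 2 := by
    rw [hX2, le_div_iff₀ hspos]
    have hfourpos : (0:ℝ) < 4 * s := by positivity
    have key : (2 * s * M ^ 2 + M * σ) * s ≤ 2 * (s * E + σ) ^ 2 := by
      have h4 : (2*(s:ℝ)*M^2 + M*σ) * s * (4*s) = 2*s*((M*(2*s))^2 + σ*(M*(2*s))) := by ring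
      have h5 : 2*(s:ℝ)*((2*s*E+σ)^2 + σ*(2*s*E+σ)) ≤ 2*(s*E+σ)^2 * (4*s) := by
        nlinarith [mul_nonneg (mul_nonneg hspos.le (mul_nonneg hspos.le hE0)) hσ0,
          mul_nonneg hspos.le (sq_nonneg σ)]
      have h6 : (2*(s:ℝ)*M^2 + M*σ) * s * (4*s) ≤ 2*(s*E+σ)^2 * (4*s) := by
        rw [h4, hMs]; exact h5
      exact le_of_mul_le_mul_right h6 hfourpos
    nlinarith [hnsq, hspos]
  have hXnn : 0 ≤ Real.sqrt 2 * (t * E + σ / t) := by positivity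
  calc l2 h = Real.sqrt (nsq h) := rfl
  _ ≤ Real.sqrt ((Real.sqrt 2 * (t * E + σ / t)) ^ 2) := Real.sqrt_le_sqrt hfinal
  _ = Real.sqrt 2 * (t * E + σ / t) := Real.sqrt_sq hXnn

end l2b

section decode
variable {m' N : ℕ}

lemma linf_mulVec_le_sum [NeZero (m' * (2 * (1 + Nat.clog 2 N)))]
    (W : Matrix (Fin m') (Fin N) ℝ) (hW01 : ∀ i j, W i j = 0 ∨ W i j = 1) (u : Fin N → ℂ) :
    linf (((khatriRao W (bitTestExt N)).map (fun a => (a : ℂ))).mulVec u) ≤ ∑ k, ‖u k‖ := by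
  unfold linf
  exact ciSup_le fun r => linf_mulVec_le W hW01 r u

lemma l2_est (W : Matrix (Fin m') (Fin N) ℝ) (K s α : ℕ)
    (hW01 : ∀ i j, W i j = 0 ∨ W i j = 1)
    (hWcol : ∀ j, (K : ℝ) ≤ ∑ i, W i j)
    (hWcoh : ∀ j l, j ≠ l → ∑ i, W i j * W i l ≤ (α : ℝ))
    (hs : 1 ≤ s) (hα : 1 ≤ α) (hKs : 4 * α * s + 1 ≤ K)
    (h : Fin N → ℂ) (T : Finset (Fin N)) (hT : T.card ≤ 2 * s) (E : ℝ) (hE0 : 0 ≤ E)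
    (hE : ∀ r : Fin m', ‖∑ k, (W r k : ℂ) * h k‖ ≤ E) :
    l2 h ≤ Real.sqrt 2 * (Real.sqrt s * E + (∑ l ∈ Tᶜ, ‖h l‖) / Real.sqrt s) :=
  l2_bound s hs h E hE0 T hT
    (fun j => core_est W K s α hW01 hWcol hWcoh hs hα hKs h E hE T hT j)

lemma sparse_inj (W : Matrix (Fin m') (Fin N) ℝ) (K s α : ℕ)
    (hW01 : ∀ i j, W i j = 0 ∨ W i j = 1)
    (hWcol : ∀ j, (K : ℝ) ≤ ∑ i, W i j)
    (hWcoh : ∀ j l, j ≠ l → ∑ i, W i j * W i l ≤ (α : ℝ))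
    (hs : 1 ≤ s) (hα : 1 ≤ α) (hKs : 4 * α * s + 1 ≤ K) (hm' : 0 < m')
    (v : Fin N → ℂ) (T : Finset (Fin N)) (hTcard : T.card ≤ 2 * s)
    (hsupp : ∀ i, i ∉ T → v i = 0) :
    l2 v ≤ Real.sqrt 2 * (Real.sqrt s *
      linf (((khatriRao W (bitTestExt N)).map (fun a => (a : ℂ))).mulVec v)) := by
  haveI : NeZero (m' * (2 * (1 + Nat.clog 2 N))) := ⟨by positivity⟩
  set L := linf (((khatriRao W (bitTestExt N)).map (fun a => (a : ℂ))).mulVec v) with hL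
  have hE : ∀ r : Fin m', ‖∑ k, (W r k : ℂ) * v k‖ ≤ L := by
    intro r
    rw [← row_eq W hm' r v]
    exact apply_le_linf _ _
  have hσ : (∑ l ∈ Tᶜ, ‖v l‖) = 0 :=
    Finset.sum_eq_zero fun l hl => by rw [hsupp l (Finset.mem_compl.1 hl)]; simp
  have := l2_est W K s α hW01 hWcol hWcoh hs hα hKs v T hTcard L
    (hL ▸ linf_nonneg _) hE
  rwa [hσ, zero_div, add_zero] at this

end decode


section minimizer
variable {m' N : ℕ}

/-- Existence of a global minimizer of the decoding functional. -/
lemma exists_min (W : Matrix (Fin m') (Fin N) ℝ) (K s α : ℕ)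
    (hW01 : ∀ i j, W i j = 0 ∨ W i j = 1)
    (hWcol : ∀ j, (K : ℝ) ≤ ∑ i, W i j)
    (hWcoh : ∀ j l, j ≠ l → ∑ i, W i j * W i l ≤ (α : ℝ))
    (hs : 1 ≤ s) (hα : 1 ≤ α) (hKs : 4 * α * s + 1 ≤ K) (hm' : 0 < m')
    (y : Fin (m' * (2 * (1 + Nat.clog 2 N))) → ℂ) :
    ∃ xs : Fin N → ℂ, ∀ u : Fin N → ℂ,
      bestErr1 xs s / Real.sqrt s + Real.sqrt s *
        linf (y - ((khatriRao W (bitTestExt N)).map (fun a => (a : ℂ))).mulVec xs) ≤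
      bestErr1 u s / Real.sqrt s + Real.sqrt s *
        linf (y - ((khatriRao W (bitTestExt N)).map (fun a => (a : ℂ))).mulVec u) := by
  classical
  haveI : NeZero (m' * (2 * (1 + Nat.clog 2 N))) := ⟨by positivity⟩
  set A := (khatriRao W (bitTestExt N)).map (fun a => (a : ℂ)) with hA
  have hspos : (0 : ℝ) < s := by exact_mod_cast hs
  set t : ℝ := Real.sqrt s with htdef
  have htpos : 0 < t := Real.sqrt_pos.2 hspos
  have ht2 : t ^ 2 = s := Real.sq_sqrt (le_of_lt hspos)
  -- the per-support functionals
  set G : Finset (Fin N) → (Fin N → ℂ) → ℝ :=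
    fun T u => (∑ i ∈ Tᶜ, ‖u i‖) / t + t * linf (y - A.mulVec u) with hG
  set Gt : (Fin N → ℂ) → ℝ :=
    fun u => bestErr1 u s / t + t * linf (y - A.mulVec u) with hGt
  have hGnn : ∀ (T : Finset (Fin N)) (u : Fin N → ℂ), 0 ≤ G T u := fun T u =>
    add_nonneg (div_nonneg (Finset.sum_nonneg fun i _ => norm_nonneg _) htpos.le)
      (mul_nonneg htpos.le (linf_nonneg _))
  have hGt_le : ∀ (T : Finset (Fin N)), T.card ≤ s → ∀ u, Gt u ≤ G T u := by
    intro T hT u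
    have h1 : bestErr1 u s ≤ ∑ i ∈ Tᶜ, ‖u i‖ := by
      calc bestErr1 u s ≤ ∑ i, ‖u i - T.piecewise u 0 i‖ :=
            bestErr1_le u s _ (le_trans (ncard_supp_piecewise_le T u) hT)
      _ = ∑ i ∈ Tᶜ, ‖u i‖ := sum_sub_piecewise T u
    exact add_le_add ((div_le_div_iff_of_pos_right htpos).2 h1) le_rfl
  -- continuity
  have hAmv : Continuous fun u : Fin N → ℂ => A.mulVec u := by
    have he : (fun u : Fin N → ℂ => A.mulVec u) = fun u => A.mulVecLin u := rfl
    rw [he]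
    exact A.mulVecLin.continuous_of_finiteDimensional
  have hlinfc : Continuous fun u : Fin N → ℂ => linf (y - A.mulVec u) := by
    have he : (fun u : Fin N → ℂ => linf (y - A.mulVec u)) = fun u => ‖y - A.mulVec u‖ :=
      funext fun u => linf_eq_norm _
    rw [he]
    exact (continuous_const.sub hAmv).norm
  have hcont : ∀ T : Finset (Fin N), Continuous (G T) := by
    intro T
    refine Continuous.add ?_ (continuous_const.mul hlinfc)
    exact (continuous_finset_sum _ fun i _ => (continuous_apply i).norm).div_const t
  -- coercivity
  have hkey : ∀ T : Finset (Fin N), T.card ≤ s → ∀ u : Fin N → ℂ,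
      ‖u‖ ≤ (t + Real.sqrt 2 * s + Real.sqrt 2) * G T u + Real.sqrt 2 * t * linf y := by
    intro T hT u
    set v := T.piecewise u 0 with hv
    set P : ℝ := ∑ i ∈ Tᶜ, ‖u i‖ with hP
    have hP0 : 0 ≤ P := Finset.sum_nonneg fun i _ => norm_nonneg _
    set Q : ℝ := linf (y - A.mulVec u) with hQ
    have hQ0 : 0 ≤ Q := linf_nonneg _
    set L : ℝ := linf y with hLdef
    have hL0 : 0 ≤ L := linf_nonneg _
    have hGval : G T u = P / t + t * Q := rfl
    have h1 : ‖u‖ ≤ l2 u :=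
      (pi_norm_le_iff_of_nonneg (l2_nonneg u)).2 fun i => apply_le_l2 u i
    have h2 : l2 u ≤ l2 (u - v) + l2 v := by
      calc l2 u = l2 ((u - v) + v) := by rw [sub_add_cancel]
      _ ≤ l2 (u - v) + l2 v := l2_add_le _ _
    have h3 : l2 (u - v) ≤ P := by
      refine le_trans (l2_le_sum_norm _) (le_of_eq ?_)
      rw [hP, ← sum_sub_piecewise T u]
      exact Finset.sum_congr rfl fun i _ => rfl
    have h4 : l2 v ≤ Real.sqrt 2 * (t * linf (A.mulVec v)) :=
      sparse_inj W K s α hW01 hWcol hWcoh hs hα hKs hm' v T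
        (le_trans hT (by omega)) (fun i hi => T.piecewise_eq_of_notMem _ _ hi)
    have h5 : linf (A.mulVec v) ≤ P + Q + L := by
      have hdec : A.mulVec v = A.mulVec (v - u) + (-(y - A.mulVec u)) + y := by
        rw [Matrix.mulVec_sub]
        abel
      calc linf (A.mulVec v)
          ≤ linf (A.mulVec (v - u) + (-(y - A.mulVec u))) + linf y := by
            rw [hdec]; exact linf_add_le _ _
      _ ≤ linf (A.mulVec (v - u)) + linf (-(y - A.mulVec u)) + linf y :=
            add_le_add_left (linf_add_le _ _) _
      _ ≤ P + Q + L := by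
            rw [linf_neg]
            have h6 : linf (A.mulVec (v - u)) ≤ ∑ k, ‖(v - u) k‖ :=
              linf_mulVec_le_sum W hW01 _
            have h7 : ∑ k, ‖(v - u) k‖ = P := by
              rw [hP, ← sum_sub_piecewise T u]
              exact Finset.sum_congr rfl fun k _ => by rw [Pi.sub_apply, norm_sub_rev]
            exact add_le_add (add_le_add (h7 ▸ h6) le_rfl) le_rfl
    have hPG : P ≤ t * G T u := by
      rw [hGval, mul_add, mul_div_cancel₀ _ (ne_of_gt htpos)]
      nlinarith
    have hQG : t * Q ≤ G T u := by
      rw [hGval]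
      have : 0 ≤ P / t := div_nonneg hP0 htpos.le
      linarith
    have h8 : Real.sqrt 2 * t * P ≤ Real.sqrt 2 * s * G T u := by
      have h9 : Real.sqrt 2 * t * P ≤ Real.sqrt 2 * t * (t * G T u) := by
        refine mul_le_mul_of_nonneg_left hPG (mul_nonneg (Real.sqrt_nonneg 2) htpos.le)
      calc Real.sqrt 2 * t * P ≤ Real.sqrt 2 * t * (t * G T u) := h9
      _ = Real.sqrt 2 * t ^ 2 * G T u := by ring
      _ = Real.sqrt 2 * s * G T u := by rw [ht2]
    have h10 : Real.sqrt 2 * t * Q ≤ Real.sqrt 2 * G T u := by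
      have := mul_le_mul_of_nonneg_left hQG (Real.sqrt_nonneg 2)
      calc Real.sqrt 2 * t * Q = Real.sqrt 2 * (t * Q) := by ring
      _ ≤ Real.sqrt 2 * G T u := this
    have hsq2 : (0:ℝ) ≤ Real.sqrt 2 := Real.sqrt_nonneg 2
    nlinarith [mul_le_mul_of_nonneg_left h5 (mul_nonneg hsq2 htpos.le)]
  -- minimizer for each support
  set c : ℝ := t + Real.sqrt 2 * s + Real.sqrt 2 with hc
  have hcpos : 0 < c := by positivity
  set d : ℝ := Real.sqrt 2 * t * linf y with hd
  have hd0 : 0 ≤ d := mul_nonneg (mul_nonneg (Real.sqrt_nonneg 2) htpos.le) (linf_nonneg y)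
  have hminT : ∀ T : Finset (Fin N), T.card ≤ s → ∃ xT : Fin N → ℂ, ∀ u, G T xT ≤ G T u := by
    intro T hT
    set R := c * G T 0 + d with hR
    have hR0 : 0 ≤ R := add_nonneg (mul_nonneg hcpos.le (hGnn T 0)) hd0
    obtain ⟨xT, hxTmem, hxTmin⟩ := (isCompact_closedBall (0 : Fin N → ℂ) R).exists_isMinOn
      ⟨0, Metric.mem_closedBall_self hR0⟩ ((hcont T).continuousOn)
    refine ⟨xT, fun u => ?_⟩
    by_cases hu : u ∈ Metric.closedBall (0 : Fin N → ℂ) R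
    · exact hxTmin hu
    · have hG0 : G T xT ≤ G T 0 := hxTmin (Metric.mem_closedBall_self hR0)
      have hnorm : R < ‖u‖ := by
        simpa [Metric.mem_closedBall, dist_zero_right] using hu
      have hub := hkey T hT u
      have hlt : G T 0 < G T u := by nlinarith
      linarith
  choose! xT hxT using hminT
  obtain ⟨T₀, hT₀mem, hT₀min⟩ := Finset.exists_min_image
    ((Finset.univ : Finset (Fin N)).powerset.filter fun T => T.card ≤ s)
    (fun T => G T (xT T)) ⟨∅, by simp⟩
  have hT₀card : T₀.card ≤ s := (Finset.mem_filter.1 hT₀mem).2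
  refine ⟨xT T₀, fun u => ?_⟩
  show Gt (xT T₀) ≤ Gt u
  obtain ⟨Tu, hTucard, hTueq, -⟩ := exists_best1 u s
  have h1 : Gt (xT T₀) ≤ G T₀ (xT T₀) := hGt_le T₀ hT₀card _
  have h2 : G T₀ (xT T₀) ≤ G Tu (xT Tu) := hT₀min Tu
    (Finset.mem_filter.2 ⟨Finset.mem_powerset.2 (Finset.subset_univ _), hTucard⟩)
  have h3 : G Tu (xT Tu) ≤ G Tu u := hxT Tu hTucard u
  have h4 : G Tu u = Gt u := by
    rw [hG, hGt]
    simp only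
    rw [← hTueq]
  linarith
end minimizer


/-- Sublinear-time compressive sensing via coherent matrices: if `W` is
`(K, α)`-coherent with `K ≥ 4αs + 1`, then there is a recovery map `f` with `2s`-sparse outputs
such that `‖x − f((W ⊙ B'_N)x + n)‖₂ ≤ ‖x − x_{2s}‖₂ + 6(1+√2)(‖x − x_s‖₁/√s + √s‖n‖_∞)`. -/
theorem stmt_15 {m' N : ℕ} (s K α : ℕ)
    (hs : 1 ≤ s ∧ s ≤ N) (hK : 1 ≤ K ∧ K ≤ N) (hα : 1 ≤ α ∧ α ≤ N)
    (W : Matrix (Fin m') (Fin N) ℝ) (hW : Coherent W K (α : ℝ))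
    (hKs : 4 * α * s + 1 ≤ K) :
    ∃ f : (Fin (m' * (2 * (1 + Nat.clog 2 N))) → ℂ) → (Fin N → ℂ),
      (∀ y, Set.ncard {i | f y i ≠ 0} ≤ 2 * s) ∧
      ∀ (x : Fin N → ℂ) (n : Fin (m' * (2 * (1 + Nat.clog 2 N))) → ℂ),
        l2 (x - f (((khatriRao W (bitTestExt N)).map (fun a => (a : ℂ))).mulVec x + n)) ≤
          bestErr2 x (2 * s) +
            6 * (1 + Real.sqrt 2) * (bestErr1 x s / Real.sqrt s + Real.sqrt s * linf n) := by
  classical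
  obtain ⟨hW01, hWcol, hWcoh⟩ := hW
  obtain ⟨hs1, hsN⟩ := hs
  obtain ⟨hK1, hKN⟩ := hK
  obtain ⟨hα1, hαN⟩ := hα
  have hN : 0 < N := lt_of_lt_of_le hs1 hsN
  have hm' : 0 < m' := by
    rcases Nat.eq_zero_or_pos m' with h0 | h1
    · exfalso
      subst h0
      have := hWcol ⟨0, hN⟩
      simp only [Finset.univ_eq_empty, Finset.sum_empty] at this
      have : (K : ℝ) ≤ 0 := this
      have hK0 : (1 : ℝ) ≤ (K : ℝ) := by exact_mod_cast hK1
      linarith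
    · exact h1
  haveI : NeZero (m' * (2 * (1 + Nat.clog 2 N))) := ⟨by positivity⟩
  set A := (khatriRao W (bitTestExt N)).map (fun a => (a : ℂ)) with hA
  have hspos : (0 : ℝ) < s := by exact_mod_cast hs1
  have htpos : (0 : ℝ) < Real.sqrt s := Real.sqrt_pos.2 hspos
  have key : ∀ y : Fin (m' * (2 * (1 + Nat.clog 2 N))) → ℂ,
      ∃ z : Fin N → ℂ, Set.ncard {i | z i ≠ 0} ≤ 2 * s ∧
      ∀ (x : Fin N → ℂ) (n : Fin (m' * (2 * (1 + Nat.clog 2 N))) → ℂ),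
        A.mulVec x + n = y →
        l2 (x - z) ≤ bestErr2 x (2 * s) +
          6 * (1 + Real.sqrt 2) * (bestErr1 x s / Real.sqrt s + Real.sqrt s * linf n) := by
    intro y
    obtain ⟨xs, hxs⟩ := exists_min W K s α hW01 hWcol hWcoh hs1 hα1 hKs hm' y
    rw [← hA] at hxs
    obtain ⟨T2, hT2card, hT2eq⟩ := exists_best2 xs (2 * s)
    refine ⟨T2.piecewise xs 0, le_trans (ncard_supp_piecewise_le T2 xs) hT2card, ?_⟩
    intro x n hy
    set z := T2.piecewise xs 0 with hz
    set nh := y - A.mulVec xs with hnh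
    set h := x - xs with hh
    have hyx : y - A.mulVec x = n := by rw [← hy]; abel
    have hxs' : bestErr1 xs s / Real.sqrt s + Real.sqrt s * linf nh ≤
        bestErr1 x s / Real.sqrt s + Real.sqrt s * linf n := by
      have := hxs x
      rwa [hyx] at this
    -- measurement bound
    have hx' : A.mulVec x = y - n := by rw [← hy]; abel
    have hE : ∀ r : Fin m', ‖∑ k, (W r k : ℂ) * h k‖ ≤ linf nh + linf n := by
      intro r
      rw [← row_eq W hm' r h]
      have hvec : ((khatriRao W (bitTestExt N)).map (fun a => (a : ℂ))).mulVec h = nh - n := by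
        rw [← hA, hh, Matrix.mulVec_sub, hx', hnh]
        abel
      refine le_trans (apply_le_linf _ _) ?_
      rw [← hA, hvec]
      calc linf (nh - n) = linf (nh + (-n)) := by rw [sub_eq_add_neg]
      _ ≤ linf nh + linf (-n) := linf_add_le _ _
      _ = linf nh + linf n := by rw [linf_neg]
    -- tail bound
    obtain ⟨Tx, hTxcard, hTxeq, -⟩ := exists_best1 x s
    obtain ⟨Ts, hTscard, hTseq, -⟩ := exists_best1 xs s
    set T := Tx ∪ Ts with hT
    have hTcard : T.card ≤ 2 * s := le_trans (Finset.card_union_le _ _) (by omega)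
    have hσ : ∑ l ∈ Tᶜ, ‖h l‖ ≤ bestErr1 x s + bestErr1 xs s := by
      have h1 : ∑ l ∈ Tᶜ, ‖h l‖ ≤ ∑ l ∈ Tᶜ, ‖x l‖ + ∑ l ∈ Tᶜ, ‖xs l‖ := by
        rw [← Finset.sum_add_distrib]
        refine Finset.sum_le_sum fun l _ => ?_
        rw [hh, Pi.sub_apply]
        exact norm_sub_le _ _
      have h2 : ∑ l ∈ Tᶜ, ‖x l‖ ≤ ∑ l ∈ Txᶜ, ‖x l‖ :=
        Finset.sum_le_sum_of_subset_of_nonneg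
          (Finset.compl_subset_compl.2 Finset.subset_union_left) fun _ _ _ => norm_nonneg _
      have h3 : ∑ l ∈ Tᶜ, ‖xs l‖ ≤ ∑ l ∈ Tsᶜ, ‖xs l‖ :=
        Finset.sum_le_sum_of_subset_of_nonneg
          (Finset.compl_subset_compl.2 Finset.subset_union_right) fun _ _ _ => norm_nonneg _
      rw [hTxeq, hTseq]
      linarith
    set E : ℝ := linf nh + linf n with hEdef
    have hE0 : 0 ≤ E := add_nonneg (linf_nonneg nh) (linf_nonneg n)
    have hl2h : l2 h ≤ Real.sqrt 2 * (Real.sqrt s * E + (∑ l ∈ Tᶜ, ‖h l‖) / Real.sqrt s) :=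
      l2_est W K s α hW01 hWcol hWcoh hs1 hα1 hKs h T hTcard E hE0 hE
    set Gx : ℝ := bestErr1 x s / Real.sqrt s + Real.sqrt s * linf n with hGxdef
    have hGx0 : 0 ≤ Gx :=
      add_nonneg (div_nonneg (bestErr1_nonneg x s) htpos.le)
        (mul_nonneg htpos.le (linf_nonneg n))
    have hl2hG : l2 h ≤ Real.sqrt 2 * (Gx + Gx) := by
      have hσdiv : (∑ l ∈ Tᶜ, ‖h l‖) / Real.sqrt s ≤
          bestErr1 x s / Real.sqrt s + bestErr1 xs s / Real.sqrt s := by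
        rw [← add_div]
        exact (div_le_div_iff_of_pos_right htpos).2 hσ
      have hmulE : Real.sqrt s * E = Real.sqrt s * linf nh + Real.sqrt s * linf n := by
        rw [hEdef]; ring
      have expand : Real.sqrt s * E + (∑ l ∈ Tᶜ, ‖h l‖) / Real.sqrt s ≤
          Gx + (bestErr1 xs s / Real.sqrt s + Real.sqrt s * linf nh) := by
        rw [hGxdef]
        linarith
      calc l2 h ≤ Real.sqrt 2 * (Real.sqrt s * E + (∑ l ∈ Tᶜ, ‖h l‖) / Real.sqrt s) := hl2h
      _ ≤ Real.sqrt 2 * (Gx + (bestErr1 xs s / Real.sqrt s + Real.sqrt s * linf nh)) :=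
          mul_le_mul_of_nonneg_left expand (Real.sqrt_nonneg 2)
      _ ≤ Real.sqrt 2 * (Gx + Gx) :=
          mul_le_mul_of_nonneg_left (add_le_add_right hxs' Gx) (Real.sqrt_nonneg 2)
    -- assemble
    have step1 : l2 (x - z) ≤ l2 h + l2 (xs - z) := by
      have hdec : x - z = h + (xs - z) := by rw [hh]; abel
      rw [hdec]
      exact l2_add_le _ _
    have step2 : l2 (xs - z) = bestErr2 xs (2 * s) := by rw [hz, ← hT2eq]
    obtain ⟨Tx2, hTx2card, hTx2eq⟩ := exists_best2 x (2 * s)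
    have step3 : bestErr2 xs (2 * s) ≤ bestErr2 x (2 * s) + l2 h := by
      have hb : bestErr2 xs (2 * s) ≤ l2 (xs - Tx2.piecewise x 0) :=
        bestErr2_le xs (2 * s) _ (le_trans (ncard_supp_piecewise_le _ _) hTx2card)
      have hc : l2 (xs - Tx2.piecewise x 0) ≤ l2 (xs - x) + l2 (x - Tx2.piecewise x 0) := by
        have hdec : xs - Tx2.piecewise x 0 = (xs - x) + (x - Tx2.piecewise x 0) := by abel
        rw [hdec]
        exact l2_add_le _ _
      have hd : l2 (xs - x) = l2 h := by rw [hh, l2_sub_rev]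
      have he : l2 (x - Tx2.piecewise x 0) = bestErr2 x (2 * s) := hTx2eq.symm
      linarith
    have hfinal : l2 (x - z) ≤ bestErr2 x (2 * s) + 2 * l2 h := by linarith
    have hconst : 2 * l2 h ≤ 6 * (1 + Real.sqrt 2) * Gx := by
      have h2G : l2 h ≤ 2 * Real.sqrt 2 * Gx := by
        calc l2 h ≤ Real.sqrt 2 * (Gx + Gx) := hl2hG
        _ = 2 * Real.sqrt 2 * Gx := by ring
      nlinarith [Real.sqrt_nonneg 2, hGx0]
    calc l2 (x - z) ≤ bestErr2 x (2 * s) + 2 * l2 h := hfinal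
    _ ≤ bestErr2 x (2 * s) + 6 * (1 + Real.sqrt 2) * Gx := by linarith
  refine ⟨fun y => (key y).choose, fun y => ((key y).choose_spec).1, ?_⟩
  intro x n
  exact ((key (A.mulVec x + n)).choose_spec).2 x n rfl
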